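/- The double *-adjoint of initial pawn annihilation is deletion of the first pawn: for all words x and y, ⟨a_{p,0}* x | y⟩ = ⟨x | a_{p,1} y⟩. Explicitly: if y contains at least one `true` entry then ⟨true :: x | y⟩ = ⟨x | y′⟩, where y′ is y with its leftmost `true` entry deleted; and if y contains no `true` entry then ⟨true :: x | y⟩ = 0. -/

import Mathlib

/-- A single pawn move: a pawn (`true`) advances one square rightward into an
empty square (`false`). -/
def PawnMove (w₀ w₁ : List Bool) : Prop :=
  ∃ u v : List Bool, w₀ = u ++ [true, false] ++ v ∧ w₁ = u ++ [false, true] ++ v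

/-- Reachability: the reflexive-transitive closure of the single-move relation. -/
def Reach : List Bool → List Bool → Prop :=
  Relation.ReflTransGen PawnMove

/-- The `ZMod 2` pairing `⟨w₀|w₁⟩`: `1` if `w₁` is reachable from `w₀`, else `0`. -/
noncomputable def pairing (w₀ w₁ : List Bool) : ZMod 2 :=
  open Classical in if Reach w₀ w₁ then 1 else 0

lemma reach_append_left (c : List Bool) {a b : List Bool} (h : Reach a b) :
    Reach (c ++ a) (c ++ b) := by
  induction h with
  | refl => exact Relation.ReflTransGen.refl
  | tail _ hmv ih =>
    refine ih.tail ?_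
    obtain ⟨u, v, h1, h2⟩ := hmv
    exact ⟨c ++ u, v, by simp [h1], by simp [h2]⟩

lemma reach_shift (k : ℕ) (z : List Bool) :
    Reach (true :: (List.replicate k false ++ z)) (List.replicate k false ++ true :: z) := by
  induction k generalizing z with
  | zero => exact Relation.ReflTransGen.refl
  | succ n ih =>
    have step : PawnMove (true :: (List.replicate (n+1) false ++ z))
        (false :: (true :: (List.replicate n false ++ z))) :=
      ⟨[], List.replicate n false ++ z, by simp [List.replicate_succ], by simp⟩
    refine Relation.ReflTransGen.head step ?_
    have := reach_append_left [false] (ih z)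
    exact this

lemma reach_count {a b : List Bool} (h : Reach a b) : a.count true = b.count true := by
  induction h with
  | refl => rfl
  | tail _ hmv ih =>
    obtain ⟨u, v, h1, h2⟩ := hmv
    subst h1; subst h2
    simp [List.count_append, List.count_cons] at *
    omega

lemma move_decomp (k : ℕ) (z u v : List Bool)
    (h : List.replicate k false ++ true :: z = u ++ [true, false] ++ v) :
    (u = List.replicate k false ∧ z = false :: v) ∨
    (∃ u', u = List.replicate k false ++ true :: u' ∧ z = u' ++ [true, false] ++ v) := by
  induction k generalizing u with
  | zero =>
    cases u with
    | nil => left; simp at h; simp [h]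
    | cons b u' =>
      right
      simp only [List.replicate_zero, List.nil_append, List.cons_append,
        List.cons.injEq] at h
      exact ⟨u', by simp [h.1], by simpa using h.2⟩
  | succ n ih =>
    cases u with
    | nil => simp [List.replicate_succ] at h
    | cons b u' =>
      simp only [List.replicate_succ, List.cons_append, List.cons.injEq] at h
      obtain ⟨rfl, h2⟩ := h
      rcases ih u' h2 with ⟨rfl, hz⟩ | ⟨u'', rfl, hz⟩
      · left; exact ⟨by simp [List.replicate_succ], hz⟩
      · right; exact ⟨u'', by simp [List.replicate_succ], hz⟩

lemma reach_cons_true {x w : List Bool} (h : Reach (true :: x) w) :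
    ∃ k z, w = List.replicate k false ++ true :: z ∧
      Reach x (List.replicate k false ++ z) := by
  induction h with
  | refl => exact ⟨0, x, by simp, Relation.ReflTransGen.refl⟩
  | tail _ hmv ih =>
    obtain ⟨k, z, rfl, hr⟩ := ih
    obtain ⟨u, v, h1, h2⟩ := hmv
    rcases move_decomp k z u v h1 with ⟨rfl, rfl⟩ | ⟨u', rfl, rfl⟩
    · refine ⟨k + 1, v, ?_, ?_⟩
      · simp [h2, List.replicate_succ']
      · simpa [List.replicate_succ'] using hr
    · refine ⟨k, u' ++ [false, true] ++ v, ?_, ?_⟩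
      · simp [h2]
      · refine hr.tail ⟨List.replicate k false ++ u', v, by simp, by simp⟩

lemma rep_inj (k k' : ℕ) (z z' : List Bool)
    (h : List.replicate k false ++ true :: z = List.replicate k' false ++ true :: z') :
    k = k' ∧ z = z' := by
  induction k generalizing k' with
  | zero =>
    cases k' with
    | zero => simpa using h
    | succ n => simp [List.replicate_succ] at h
  | succ n ih =>
    cases k' with
    | zero => simp [List.replicate_succ] at h
    | succ m =>
      simp only [List.replicate_succ, List.cons_append, List.cons.injEq] at h
      obtain ⟨k_eq, z_eq⟩ := ih m h.2
      exact ⟨by omega, z_eq⟩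

lemma exists_decomp {y : List Bool} (h : true ∈ y) :
    ∃ k z, y = List.replicate k false ++ true :: z ∧
      y.erase true = List.replicate k false ++ z := by
  induction y with
  | nil => simp at h
  | cons b t ih =>
    cases b with
    | true => exact ⟨0, t, by simp, by simp⟩
    | false =>
      have ht : true ∈ t := by simpa using h
      obtain ⟨k, z, h1, h2⟩ := ih ht
      exact ⟨k + 1, z, by simp [h1, List.replicate_succ],
        by simp [List.replicate_succ, List.erase_cons, h2]⟩

/-- The double `*`-adjoint of initial pawn annihilation is deletion of the
first pawn: `⟨a_{p,0}* x | y⟩ = ⟨x | a_{p,1} y⟩`. If `y` contains a `true`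
then `⟨true :: x | y⟩ = ⟨x | y.erase true⟩`; otherwise `⟨true :: x | y⟩ = 0`. -/
theorem initial_pawn_creation_adjoint :
    (∀ x y : List Bool, true ∈ y →
      pairing (true :: x) y = pairing x (y.erase true)) ∧
    (∀ x y : List Bool, true ∉ y → pairing (true :: x) y = 0) := by
  constructor
  · intro x y hy
    obtain ⟨k, z, rfl, he⟩ := exists_decomp hy
    rw [he]
    have hiff : Reach (true :: x) (List.replicate k false ++ true :: z) ↔
        Reach x (List.replicate k false ++ z) := by
      constructor
      · intro h
        obtain ⟨k', z', heq, hr⟩ := reach_cons_true h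
        obtain ⟨rfl, rfl⟩ := rep_inj k k' z z' heq
        exact hr
      · intro h
        exact (reach_append_left [true] h).trans (reach_shift k z)
    classical
    unfold pairing
    exact if_congr hiff rfl rfl
  · intro x y hy
    unfold pairing
    rw [if_neg]
    intro h
    have hc := reach_count h
    have : y.count true = 0 := List.count_eq_zero_of_not_mem hy
    simp [this] at hc
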